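/- Let $W$ be an $n \times n$ complex Hermitian matrix with spectral decomposition $W = \sum_{i=1}^n \lambda_i u_i u_i^H$, where $\lambda_1, \dots, \lambda_n$ are the (real) eigenvalues of $W$ and $u_1, \dots, u_n$ form an orthonormal basis of eigenvectors. Define $X(W) := \sum_{i : \lambda_i > 0} \lambda_i u_i u_i^H$. Then for every $n \times n$ Hermitian positive semidefinite matrix $X$, $\|X - W\|_2^2 \geq \|X(W) - W\|_2^2$; that is, $X(W)$ minimizes the squared Frobenius distance to $W$ over the set of Hermitian positive semidefinite matrices. -/

import Mathlib

open Matrix Finset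
open scoped ComplexOrder

/-- Squared Frobenius norm of a complex matrix: `Re (tr (Mᴴ M))`. -/
noncomputable def frobSq {n : ℕ} (M : Matrix (Fin n) (Fin n) ℂ) : ℝ :=
  ((Mᴴ * M).trace).re

lemma frobSq_nonneg {n : ℕ} (M : Matrix (Fin n) (Fin n) ℂ) : 0 ≤ frobSq M := by
  unfold frobSq
  rw [Matrix.trace, Complex.re_sum]
  refine Finset.sum_nonneg fun j _ => ?_
  rw [Matrix.diag_apply, Matrix.mul_apply, Complex.re_sum]
  refine Finset.sum_nonneg fun i _ => ?_
  simp only [Matrix.conjTranspose_apply]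
  rw [Complex.star_def, ← Complex.normSq_eq_conj_mul_self]
  exact_mod_cast Complex.normSq_nonneg _

lemma frobSq_add {n : ℕ} (A B : Matrix (Fin n) (Fin n) ℂ) :
    frobSq (A + B) = frobSq A + frobSq B + 2 * ((Aᴴ * B).trace).re := by
  unfold frobSq
  have h1 : ((Bᴴ * A).trace) = star ((Aᴴ * B).trace) := by
    rw [← Matrix.trace_conjTranspose, Matrix.conjTranspose_mul,
      Matrix.conjTranspose_conjTranspose]
  have : (A + B)ᴴ * (A + B) = Aᴴ * A + Aᴴ * B + Bᴴ * A + Bᴴ * B := by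
    rw [Matrix.conjTranspose_add]; noncomm_ring
  rw [this]
  simp only [Matrix.trace_add, Complex.add_re, h1, Complex.star_def, Complex.conj_re]
  ring

lemma trace_mul_vecMulVec {n : ℕ} (A : Matrix (Fin n) (Fin n) ℂ) (v w : Fin n → ℂ) :
    (A * Matrix.vecMulVec v w).trace = w ⬝ᵥ (A *ᵥ v) := by
  rw [Matrix.trace, dotProduct]
  refine Finset.sum_congr rfl fun j _ => ?_
  rw [Matrix.diag_apply, Matrix.mul_apply, Matrix.mulVec, dotProduct, Finset.mul_sum]
  refine Finset.sum_congr rfl fun i _ => ?_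
  rw [Matrix.vecMulVec_apply]
  ring

lemma vecMulVec_mul_vecMulVec {n : ℕ} (a b c d : Fin n → ℂ) :
    Matrix.vecMulVec a b * Matrix.vecMulVec c d = (b ⬝ᵥ c) • Matrix.vecMulVec a d := by
  ext i j
  simp only [Matrix.mul_apply, Matrix.vecMulVec_apply, Matrix.smul_apply, smul_eq_mul,
    dotProduct, Finset.sum_mul, Finset.mul_sum]
  exact Finset.sum_congr rfl fun k _ => by ring

theorem stmt_0 {n : ℕ} (W : Matrix (Fin n) (Fin n) ℂ) (hW : W.IsHermitian)
    (lam : Fin n → ℝ) (u : Fin n → (Fin n → ℂ))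
    (horth : ∀ i j, star (u i) ⬝ᵥ u j = if i = j then 1 else 0)
    (hspec : W = ∑ i, (lam i : ℂ) • Matrix.vecMulVec (u i) (star (u i)))
    (X : Matrix (Fin n) (Fin n) ℂ) (hX : X.PosSemidef) :
    frobSq (X - W) ≥
      frobSq ((∑ i ∈ Finset.univ.filter (fun i => 0 < lam i),
        (lam i : ℂ) • Matrix.vecMulVec (u i) (star (u i))) - W) := by
  set P : Matrix (Fin n) (Fin n) ℂ :=
    ∑ i ∈ Finset.univ.filter (fun i => 0 < lam i),
      (lam i : ℂ) • Matrix.vecMulVec (u i) (star (u i)) with hP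
  -- P - W = - ∑ over complement
  have hPW : P - W = ∑ i ∈ (Finset.univ.filter (fun i => 0 < lam i))ᶜ,
      (-(lam i) : ℂ) • Matrix.vecMulVec (u i) (star (u i)) := by
    rw [hspec, hP, ← Finset.sum_filter_add_sum_filter_not Finset.univ (fun i => 0 < lam i)]
    have : (Finset.univ.filter (fun i => 0 < lam i))ᶜ
        = Finset.univ.filter (fun i => ¬ 0 < lam i) := by
      ext i; simp
    rw [this]
    simp only [neg_smul]
    rw [Finset.sum_neg_distrib]
    abel
  -- P is Hermitian
  have hPherm : Pᴴ = P := by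
    rw [hP, Matrix.conjTranspose_sum]
    refine Finset.sum_congr rfl fun i _ => ?_
    ext a b
    simp only [Matrix.conjTranspose_apply, Matrix.smul_apply, Matrix.vecMulVec_apply,
      smul_eq_mul, star_mul', Pi.star_apply]
    push_cast
    simp [mul_comm]
  -- trace (P * (P - W)) = 0
  have htrP : ((P * (P - W)).trace) = 0 := by
    rw [hPW, hP, Finset.sum_mul_sum]
    rw [Matrix.trace_sum]
    refine Finset.sum_eq_zero fun i hi => ?_
    rw [Matrix.trace_sum]
    refine Finset.sum_eq_zero fun j hj => ?_
    have hij : i ≠ j := by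
      intro h; subst h
      simp only [Finset.mem_compl] at hj
      exact hj hi
    rw [smul_mul_assoc, Matrix.mul_smul, vecMulVec_mul_vecMulVec, horth, if_neg hij]
    simp
  -- Re trace (X * (P - W)) ≥ 0
  have htrX : 0 ≤ ((X * (P - W)).trace).re := by
    rw [hPW, Finset.mul_sum, Matrix.trace_sum, Complex.re_sum]
    refine Finset.sum_nonneg fun i hi => ?_
    rw [Matrix.mul_smul, Matrix.trace_smul, trace_mul_vecMulVec]
    have hquad : (0 : ℂ) ≤ star (u i) ⬝ᵥ (X *ᵥ u i) := hX.dotProduct_mulVec_nonneg (u i)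
    have hre : 0 ≤ (star (u i) ⬝ᵥ (X *ᵥ u i)).re := by
      rw [Complex.le_def] at hquad; exact hquad.1
    have him : (star (u i) ⬝ᵥ (X *ᵥ u i)).im = 0 := by
      rw [Complex.le_def] at hquad; exact hquad.2.symm
    have hlam : 0 ≤ -lam i := by
      simp only [Finset.mem_compl, Finset.mem_filter, Finset.mem_univ, true_and] at hi
      linarith [not_lt.mp hi]
    rw [smul_eq_mul, Complex.mul_re]
    push_cast
    simp only [Complex.ofReal_re, Complex.ofReal_im, Complex.neg_re, Complex.neg_im,
      him]
    nlinarith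
  -- cross term
  have hcross : (((X - P)ᴴ * (P - W)).trace).re = ((X * (P - W)).trace).re := by
    rw [Matrix.conjTranspose_sub, hX.1, hPherm, Matrix.sub_mul, Matrix.trace_sub, htrP]
    simp
  have hsplit : X - W = (X - P) + (P - W) := by abel
  rw [hsplit, frobSq_add, hcross]
  have h1 := frobSq_nonneg (X - P)
  linarith
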